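/- Let 𝒜 be a finite length abelian category, ℋ a hereditary abelian category, and F : D^b(𝒜) → D^b(ℋ) a triangulated equivalence; for each indecomposable P of 𝒜 write F(P[0]) ≅ f(P)[n(P)]. Assume there exist integers n₀ and d such that n₀ ≤ n(P) < n₀ + d for every indecomposable P of 𝒜. Then for every indecomposable Q of 𝒜, projd_𝒜 Q ≤ n(Q) − n₀ + 1 and injd_𝒜 Q ≤ n₀ + d − n(Q). In particular, gldim 𝒜 ≤ d. -/

import Mathlib

/-!
Statement 7 (Lemma on projective/injective dimensions): if `𝒜` has finite
length and `n₀ ≤ n(P) < n₀ + d` for every indecomposable `P`, then for every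
indecomposable `Q`, `projd Q ≤ n(Q) − n₀ + 1` and `injd Q ≤ n₀ + d − n(Q)`;
in particular `gldim 𝒜 ≤ d`.
-/

open CategoryTheory CategoryTheory.Limits

universe w w' v u v' u'

namespace PiecewiseHereditaryPaper

variable (𝒜 : Type u) [Category.{v} 𝒜] [Abelian 𝒜] [HasDerivedCategory.{w} 𝒜]

/-- `Ext^d(X,Y) ≠ 0`, where `Ext^d` is computed as `Hom_{D(𝒜)}(X[0], Y[0][d])`. -/
def extNonzero (X Y : 𝒜) (d : ℤ) : Prop :=
  ∃ g : (DerivedCategory.singleFunctor 𝒜 0).obj X ⟶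
      (((DerivedCategory.singleFunctor 𝒜 0).obj Y)⟦d⟧), g ≠ 0

/-- An abelian category is hereditary if `Ext^d` vanishes for all `d ≥ 2`. -/
def Hereditary : Prop := ∀ (X Y : 𝒜) (d : ℕ), 2 ≤ d → ¬ extNonzero 𝒜 X Y (d : ℤ)

variable (ℋ : Type u') [Category.{v'} ℋ] [Abelian ℋ] [HasDerivedCategory.{w'} ℋ]

/-- The projective dimension `projd_𝒜 Q = sup {d : Ext^d_𝒜(Q,Q') ≠ 0 for some Q'}`,
as an element of `ℕ∞` (the empty sup being `0`). -/
noncomputable def projDim (Q : 𝒜) : ℕ∞ :=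
  ⨆ (d : ℕ) (_ : ∃ Q' : 𝒜, extNonzero 𝒜 Q Q' d), (d : ℕ∞)

/-- The injective dimension `injd_𝒜 Q = sup {d : Ext^d_𝒜(Q',Q) ≠ 0 for some Q'}`. -/
noncomputable def injDim (Q : 𝒜) : ℕ∞ :=
  ⨆ (d : ℕ) (_ : ∃ Q' : 𝒜, extNonzero 𝒜 Q' Q d), (d : ℕ∞)

/-- The global dimension `gldim 𝒜 = sup_Q projd_𝒜 Q`. -/
noncomputable def gldim : ℕ∞ := ⨆ Q : 𝒜, projDim 𝒜 Q

/-- An abelian category has finite length if every object has a (finite)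
composition series, i.e. a finite maximal chain of subobjects from `⊥` to `⊤`. -/
def FiniteLength : Prop :=
  ∀ X : 𝒜, ∃ (m : ℕ) (f : Fin (m + 1) → Subobject X),
    f 0 = ⊥ ∧ f (Fin.last m) = ⊤ ∧ ∀ i : Fin m, f i.castSucc ⋖ f i.succ


section Aux

variable {𝒜 : Type u} [Category.{v} 𝒜] [Abelian 𝒜]

lemma covBy_cokernel_simple {X : 𝒜} {S T : Subobject X} (h : S ⋖ T) :
    Simple (cokernel (Subobject.ofLE S T h.le)) := by
  set j : (S : 𝒜) ⟶ (T : 𝒜) := Subobject.ofLE S T h.le with hjdef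
  have hC0 : ¬ IsZero (cokernel j) := by
    intro hz
    have hπ : cokernel.π j = 0 := hz.eq_zero_of_tgt _
    have hepi : Epi j := Preadditive.epi_of_cokernel_zero hπ
    have : IsIso j := isIso_of_mono_of_epi j
    have hTS : T ≤ S := Subobject.le_of_comm (inv j)
      (by rw [IsIso.inv_comp_eq]; exact (Subobject.ofLE_arrow h.le).symm)
    exact h.lt.ne (le_antisymm h.le hTS)
  apply simple_of_cosimple
  intro Z f hepi
  constructor
  · intro hiso hf0
    apply hC0
    subst hf0
    have : Mono (0 : cokernel j ⟶ Z) := inferInstance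
    exact IsZero.of_mono_zero (cokernel j) Z
  · intro hf0
    set π : (T : 𝒜) ⟶ cokernel j := cokernel.π j with hπdef
    set q : (T : 𝒜) ⟶ Z := π ≫ f with hqdef
    have hepiq : Epi q := epi_comp _ _
    set ι : kernel q ⟶ (T : 𝒜) := kernel.ι q with hιdef
    have hjq : j ≫ q = 0 := by rw [hqdef, ← Category.assoc, cokernel.condition, zero_comp]
    have hSW : S ≤ Subobject.mk (ι ≫ T.arrow) := by
      refine Subobject.le_mk_of_comm (kernel.lift q j hjq) ?_
      rw [← Category.assoc, kernel.lift_ι]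
      exact Subobject.ofLE_arrow h.le
    have hWT : Subobject.mk (ι ≫ T.arrow) ≤ T := by
      have := Subobject.mk_le_mk_of_comm (f₁ := ι ≫ T.arrow) (f₂ := T.arrow) ι rfl
      rwa [Subobject.mk_arrow] at this
    have hWneT : Subobject.mk (ι ≫ T.arrow) ≠ T := by
      intro hWT'
      have hTW : T ≤ Subobject.mk (ι ≫ T.arrow) := hWT'.ge
      have hui : Subobject.ofLEMk T (ι ≫ T.arrow) hTW ≫ ι = 𝟙 _ := by
        rw [← cancel_mono T.arrow, Category.assoc, Category.id_comp]
        exact Subobject.ofLEMk_comp hTW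
      have hq0 : q = 0 := by
        have : Subobject.ofLEMk T (ι ≫ T.arrow) hTW ≫ ι ≫ q = 0 := by
          rw [kernel.condition, comp_zero]
        rw [← Category.assoc, hui, Category.id_comp] at this
        exact this
      apply hf0
      rw [← cancel_epi π, comp_zero]
      exact hq0
    have hWS : Subobject.mk (ι ≫ T.arrow) = S := by
      by_contra hne
      exact h.2 (lt_of_le_of_ne hSW (Ne.symm hne)) (lt_of_le_of_ne hWT hWneT)
    have hvle : Subobject.mk (ι ≫ T.arrow) ≤ S := le_of_eq hWS
    have hvj : Subobject.ofMkLE (ι ≫ T.arrow) S hvle ≫ j = ι := by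
      rw [← cancel_mono T.arrow, Category.assoc]
      rw [hjdef, Subobject.ofLE_arrow h.le]
      exact Subobject.ofMkLE_arrow hvle
    have hιπ : ι ≫ π = 0 := by
      rw [← hvj, Category.assoc, hπdef, cokernel.condition, comp_zero]
    have hqu : q ≫ Abelian.epiDesc q π hιπ = π := Abelian.comp_epiDesc q π hιπ
    refine ⟨⟨Abelian.epiDesc q π hιπ, ?_, ?_⟩⟩
    · rw [← cancel_epi π, Category.comp_id, ← Category.assoc]
      exact hqu
    · rw [← cancel_epi q, Category.comp_id, ← Category.assoc, hqu]


lemma covBy_shortExact {X : 𝒜} {S T : Subobject X} (h : S ≤ T) :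
    (ShortComplex.mk (Subobject.ofLE S T h) (cokernel.π _)
      (cokernel.condition _)).ShortExact :=
  ShortComplex.ShortExact.mk'
    (ShortComplex.exact_of_g_is_cokernel _ (cokernelIsCokernel _))
    inferInstance inferInstance

variable [HasDerivedCategory.{w} 𝒜]

lemma isZero_single_bot {X : 𝒜} :
    IsZero ((DerivedCategory.singleFunctor 𝒜 0).obj ((⊥ : Subobject X) : 𝒜)) :=
  Functor.map_isZero _ (IsZero.of_iso (isZero_zero 𝒜) Subobject.botCoeIsoZero)

lemma reduction_left (hfl : FiniteLength 𝒜) (Z : DerivedCategory 𝒜) (X : 𝒜)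
    (g : (DerivedCategory.singleFunctor 𝒜 0).obj X ⟶ Z) (hg : g ≠ 0) :
    ∃ (S : 𝒜), Simple S ∧
      ∃ h : (DerivedCategory.singleFunctor 𝒜 0).obj S ⟶ Z, h ≠ 0 := by
  obtain ⟨m, f, h0, hlast, hcov⟩ := hfl X
  suffices H : ∀ i : ℕ, ∀ hi : i < m + 1,
      ∀ g' : (DerivedCategory.singleFunctor 𝒜 0).obj ((f ⟨i, hi⟩ : Subobject X) : 𝒜) ⟶ Z,
      g' ≠ 0 → ∃ (S : 𝒜), Simple S ∧
        ∃ h : (DerivedCategory.singleFunctor 𝒜 0).obj S ⟶ Z, h ≠ 0 by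
    have hm : f ⟨m, Nat.lt_succ_self m⟩ = ⊤ := hlast
    have e : ((f ⟨m, Nat.lt_succ_self m⟩ : Subobject X) : 𝒜) ≅ X := by
      rw [hm]; exact asIso (⊤ : Subobject X).arrow
    refine H m (Nat.lt_succ_self m)
      ((DerivedCategory.singleFunctor 𝒜 0).map e.hom ≫ g) ?_
    intro h0'
    apply hg
    have : g = (DerivedCategory.singleFunctor 𝒜 0).map e.inv ≫
        ((DerivedCategory.singleFunctor 𝒜 0).map e.hom ≫ g) := by
      rw [← Category.assoc, ← Functor.map_comp, e.inv_hom_id, CategoryTheory.Functor.map_id,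
        Category.id_comp]
    rw [this, h0', comp_zero]
  intro i
  induction i with
  | zero =>
    intro hi g' hg'
    have hb : f ⟨0, hi⟩ = ⊥ := by
      have : (⟨0, hi⟩ : Fin (m + 1)) = 0 := by ext; rfl
      rw [this]; exact h0
    have hz : IsZero ((DerivedCategory.singleFunctor 𝒜 0).obj ((f ⟨0, hi⟩ : Subobject X) : 𝒜)) := by
      rw [hb]; exact isZero_single_bot
    exact absurd (hz.eq_zero_of_src g') hg'
  | succ i ih =>
    intro hi g' hg'
    have him : i < m := by omega
    have hcb : f ⟨i, by omega⟩ ⋖ f ⟨i + 1, hi⟩ := by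
      have := hcov ⟨i, him⟩
      have h1 : (⟨i, him⟩ : Fin m).castSucc = ⟨i, by omega⟩ := by ext; rfl
      have h2 : (⟨i, him⟩ : Fin m).succ = ⟨i + 1, hi⟩ := by ext; rfl
      rwa [h1, h2] at this
    have hSE := covBy_shortExact hcb.le
    have hdist := hSE.singleTriangle_distinguished
    by_cases hc : (DerivedCategory.singleFunctor 𝒜 0).map
        (Subobject.ofLE _ _ hcb.le) ≫ g' = 0
    · obtain ⟨h, hh⟩ := Pretriangulated.Triangle.yoneda_exact₂ _ hdist g' hc
      refine ⟨cokernel (Subobject.ofLE _ _ hcb.le), covBy_cokernel_simple hcb, h, ?_⟩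
      intro h0'
      apply hg'
      rw [hh, h0']; exact comp_zero
    · exact ih (by omega) _ hc

lemma reduction_right_core (hfl : FiniteLength 𝒜) (Z : DerivedCategory 𝒜) (Y : 𝒜)
    (g : Z ⟶ (DerivedCategory.singleFunctor 𝒜 0).obj Y) (hg : g ≠ 0) :
    ∃ (S : 𝒜), Simple S ∧
      ∃ h : Z ⟶ (DerivedCategory.singleFunctor 𝒜 0).obj S, h ≠ 0 := by
  obtain ⟨m, f, h0, hlast, hcov⟩ := hfl Y
  suffices H : ∀ i : ℕ, ∀ hi : i < m + 1,
      ∀ g' : Z ⟶ (DerivedCategory.singleFunctor 𝒜 0).obj ((f ⟨i, hi⟩ : Subobject Y) : 𝒜),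
      g' ≠ 0 → ∃ (S : 𝒜), Simple S ∧
        ∃ h : Z ⟶ (DerivedCategory.singleFunctor 𝒜 0).obj S, h ≠ 0 by
    have hm : f ⟨m, Nat.lt_succ_self m⟩ = ⊤ := hlast
    have e : ((f ⟨m, Nat.lt_succ_self m⟩ : Subobject Y) : 𝒜) ≅ Y := by
      rw [hm]; exact asIso (⊤ : Subobject Y).arrow
    refine H m (Nat.lt_succ_self m)
      (g ≫ (DerivedCategory.singleFunctor 𝒜 0).map e.inv) ?_
    rw [Ne, Preadditive.IsIso.comp_right_eq_zero]
    exact hg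
  intro i
  induction i with
  | zero =>
    intro hi g' hg'
    have hb : f ⟨0, hi⟩ = ⊥ := by
      have : (⟨0, hi⟩ : Fin (m + 1)) = 0 := by ext; rfl
      rw [this]; exact h0
    have hz : IsZero ((DerivedCategory.singleFunctor 𝒜 0).obj ((f ⟨0, hi⟩ : Subobject Y) : 𝒜)) := by
      rw [hb]; exact isZero_single_bot
    exact absurd (hz.eq_zero_of_tgt g') hg'
  | succ i ih =>
    intro hi g' hg'
    have him : i < m := by omega
    have hcb : f ⟨i, by omega⟩ ⋖ f ⟨i + 1, hi⟩ := by
      have := hcov ⟨i, him⟩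
      have h1 : (⟨i, him⟩ : Fin m).castSucc = ⟨i, by omega⟩ := by ext; rfl
      have h2 : (⟨i, him⟩ : Fin m).succ = ⟨i + 1, hi⟩ := by ext; rfl
      rwa [h1, h2] at this
    have hSE := covBy_shortExact hcb.le
    have hdist := hSE.singleTriangle_distinguished
    by_cases hc : g' ≫ (DerivedCategory.singleFunctor 𝒜 0).map
        (cokernel.π (Subobject.ofLE _ _ hcb.le)) = 0
    · obtain ⟨h, hh⟩ := Pretriangulated.Triangle.coyoneda_exact₂ _ hdist g' hc
      refine ih (by omega) h ?_
      intro h0'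
      apply hg'
      rw [hh, h0']; exact zero_comp
    · exact ⟨cokernel (Subobject.ofLE _ _ hcb.le), covBy_cokernel_simple hcb, _, hc⟩

lemma reduce_right (hfl : FiniteLength 𝒜) {X Y : 𝒜} {k : ℤ}
    (h : extNonzero 𝒜 X Y k) : ∃ S : 𝒜, Simple S ∧ extNonzero 𝒜 X S k := by
  obtain ⟨g, hg⟩ := h
  have hg₁ : (shiftFunctor (DerivedCategory 𝒜) (-k)).map g ≫
      ((shiftFunctorCompIsoId (DerivedCategory 𝒜) k (-k) (by omega)).app
        ((DerivedCategory.singleFunctor 𝒜 0).obj Y)).hom ≠ 0 := by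
    rw [Ne, Preadditive.IsIso.comp_right_eq_zero]
    intro h0
    apply hg
    apply (shiftFunctor (DerivedCategory 𝒜) (-k)).map_injective
    rw [h0, Functor.map_zero]
  obtain ⟨S, hS, h1, hh⟩ := reduction_right_core hfl
    ((((DerivedCategory.singleFunctor 𝒜 0).obj X))⟦(-k : ℤ)⟧) Y _ hg₁
  refine ⟨S, hS, ((shiftFunctorCompIsoId (DerivedCategory 𝒜) (-k) k (by omega)).app
      ((DerivedCategory.singleFunctor 𝒜 0).obj X)).inv ≫
      (shiftFunctor (DerivedCategory 𝒜) k).map h1, ?_⟩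
  rw [Ne, Preadditive.IsIso.comp_left_eq_zero]
  intro h0
  apply hh
  apply (shiftFunctor (DerivedCategory 𝒜) k).map_injective
  rw [h0, Functor.map_zero]

lemma reduce_left (hfl : FiniteLength 𝒜) {X Y : 𝒜} {k : ℤ}
    (h : extNonzero 𝒜 X Y k) : ∃ S : 𝒜, Simple S ∧ extNonzero 𝒜 S Y k := by
  obtain ⟨g, hg⟩ := h
  obtain ⟨S, hS, h, hh⟩ := reduction_left hfl _ X g hg
  exact ⟨S, hS, h, hh⟩

end Aux

section Key

variable {𝒜 : Type u} [Category.{v} 𝒜] [Abelian 𝒜] [HasDerivedCategory.{w} 𝒜]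
variable {ℋ : Type u'} [Category.{v'} ℋ] [Abelian ℋ] [HasDerivedCategory.{w'} ℋ]

lemma key_bound (hH : Hereditary ℋ)
    (F : DerivedCategory 𝒜 ⥤ DerivedCategory ℋ)
    [F.IsEquivalence] [F.CommShift ℤ] [F.IsTriangulated]
    (f : 𝒜 → ℋ) (n : 𝒜 → ℤ)
    (hfn : ∀ P : 𝒜, Indecomposable P → Indecomposable (f P) ∧
      Nonempty (F.obj ((DerivedCategory.singleFunctor 𝒜 0).obj P) ≅
        (((DerivedCategory.singleFunctor ℋ 0).obj (f P))⟦n P⟧)))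
    {X Y : 𝒜} (hX : Indecomposable X) (hY : Indecomposable Y) {k : ℕ}
    (h : extNonzero 𝒜 X Y (k : ℤ)) : (k : ℤ) + n Y ≤ n X + 1 := by
  obtain ⟨g, hg⟩ := h
  obtain ⟨e1⟩ := (hfn X hX).2
  obtain ⟨e2⟩ := (hfn Y hY).2
  have hFg : F.map g ≠ 0 := fun h0 => hg (F.map_injective (by rw [h0, Functor.map_zero]))
  set m : ℤ := n Y + (k : ℤ) - n X with hm
  obtain ⟨χ, hχ⟩ : ∃ χ : (((DerivedCategory.singleFunctor ℋ 0).obj (f X))⟦n X⟧ ⟶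
      ((((DerivedCategory.singleFunctor ℋ 0).obj (f Y))⟦m⟧)⟦n X⟧)), χ ≠ 0 := by
    refine ⟨(e1.inv ≫ F.map g ≫ ((F.commShiftIso (k : ℤ)).hom.app
      ((DerivedCategory.singleFunctor 𝒜 0).obj Y) ≫
      (shiftFunctor (DerivedCategory ℋ) (k : ℤ)).map e2.hom)) ≫
      ((shiftFunctorAdd' (DerivedCategory ℋ) (n Y) (k : ℤ) (n Y + (k : ℤ)) rfl).symm.app
        ((DerivedCategory.singleFunctor ℋ 0).obj (f Y))).hom ≫
      ((shiftFunctorAdd' (DerivedCategory ℋ) m (n X) (n Y + (k : ℤ)) (by omega)).app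
        ((DerivedCategory.singleFunctor ℋ 0).obj (f Y))).hom, ?_⟩
    simp only [ne_eq, Category.assoc, Preadditive.IsIso.comp_left_eq_zero,
      Preadditive.IsIso.comp_right_eq_zero]
    exact hFg
  have hext : extNonzero ℋ (f X) (f Y) m := by
    refine ⟨(shiftFunctor (DerivedCategory ℋ) (n X)).preimage χ, fun h0 => hχ ?_⟩
    have h1 := congrArg ((shiftFunctor (DerivedCategory ℋ) (n X)).map) h0
    rw [Functor.map_preimage, Functor.map_zero] at h1
    exact h1
  have hm1 : m ≤ 1 := by
    by_contra hm2
    have hcast : ((m.toNat : ℕ) : ℤ) = m := by omega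
    apply hH (f X) (f Y) m.toNat (by omega)
    rw [hcast]
    exact hext
  omega

end Key

theorem projDim_injDim_bounds_of_n_bounds
    (hfl : FiniteLength 𝒜)
    (hH : Hereditary ℋ)
    (F : DerivedCategory 𝒜 ⥤ DerivedCategory ℋ)
    [F.IsEquivalence] [F.CommShift ℤ] [F.IsTriangulated]
    (f : 𝒜 → ℋ) (n : 𝒜 → ℤ)
    (hfn : ∀ P : 𝒜, Indecomposable P → Indecomposable (f P) ∧
      Nonempty (F.obj ((DerivedCategory.singleFunctor 𝒜 0).obj P) ≅
        (((DerivedCategory.singleFunctor ℋ 0).obj (f P))⟦n P⟧)))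
    (n₀ d : ℤ)
    (hbound : ∀ P : 𝒜, Indecomposable P → n₀ ≤ n P ∧ n P < n₀ + d) :
    (∀ Q : 𝒜, Indecomposable Q →
        projDim 𝒜 Q ≤ ((n Q - n₀ + 1).toNat : ℕ∞) ∧
        injDim 𝒜 Q ≤ ((n₀ + d - n Q).toNat : ℕ∞)) ∧
      gldim 𝒜 ≤ (d.toNat : ℕ∞) := by
  have key : ∀ (X Y : 𝒜), Indecomposable X → Indecomposable Y → ∀ k : ℕ,
      extNonzero 𝒜 X Y (k : ℤ) → (k : ℤ) + n Y ≤ n X + 1 :=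
    fun X Y hX hY k h => key_bound hH F f n hfn hX hY h
  have keyQ : ∀ (Q : 𝒜), Indecomposable Q → ∀ k : ℕ,
      (∃ Q', extNonzero 𝒜 Q Q' (k : ℤ)) → (k : ℤ) ≤ n Q - n₀ + 1 := by
    intro Q hQ k hk
    obtain ⟨Q', hext⟩ := hk
    obtain ⟨S, hS, hext'⟩ := reduce_right hfl hext
    have hind : Indecomposable S := @indecomposable_of_simple _ _ _ _ S hS
    have h1 := key Q S hQ hind k hext'
    have h2 := (hbound S hind).1
    omega
  have keyQ' : ∀ (Q : 𝒜), Indecomposable Q → ∀ k : ℕ,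
      (∃ Q', extNonzero 𝒜 Q' Q (k : ℤ)) → (k : ℤ) ≤ n₀ + d - n Q := by
    intro Q hQ k hk
    obtain ⟨Q', hext⟩ := hk
    obtain ⟨S, hS, hext'⟩ := reduce_left hfl hext
    have hind : Indecomposable S := @indecomposable_of_simple _ _ _ _ S hS
    have h1 := key S Q hind hQ k hext'
    have h2 := (hbound S hind).2
    omega
  have keyG : ∀ (Q : 𝒜) (k : ℕ), (∃ Q', extNonzero 𝒜 Q Q' (k : ℤ)) → (k : ℤ) ≤ d := by
    intro Q k hk
    obtain ⟨Q', hext⟩ := hk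
    obtain ⟨S', hS', hext'⟩ := reduce_right hfl hext
    obtain ⟨S, hS, hext''⟩ := reduce_left hfl hext'
    have hindS : Indecomposable S := @indecomposable_of_simple _ _ _ _ S hS
    have hindS' : Indecomposable S' := @indecomposable_of_simple _ _ _ _ S' hS'
    have h1 := key S S' hindS hindS' k hext''
    have h2 := (hbound S hindS).2
    have h3 := (hbound S' hindS').1
    omega
  refine ⟨fun Q hQ => ⟨?_, ?_⟩, ?_⟩
  · refine iSup_le fun k => iSup_le fun hk => ?_
    have h1 := keyQ Q hQ k hk
    exact Nat.cast_le.2 (by omega : k ≤ (n Q - n₀ + 1).toNat)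
  · refine iSup_le fun k => iSup_le fun hk => ?_
    have h1 := keyQ' Q hQ k hk
    exact Nat.cast_le.2 (by omega : k ≤ (n₀ + d - n Q).toNat)
  · refine iSup_le fun Q => iSup_le fun k => iSup_le fun hk => ?_
    have h1 := keyG Q k hk
    exact Nat.cast_le.2 (by omega : k ≤ d.toNat)

end PiecewiseHereditaryPaper
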